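/- Assume a_j ≠ 0 for every j = 1,…,M. Then Z(a,0) · Z(a,c)^{-1} · Z(a,0) = Z(a,−c), where Z(a,0) denotes the diagonal zig-zag matrix with off-diagonal vector 0 and −c is the entrywise negation of c. -/
import Mathlib


/-- The `M × M` zig-zag matrix `Z(a,c)` built from the (1-based) diagonal
parameters `a₁, …, a_M` and off-diagonal parameters `c₁, …, c_{M-1}`:
`Z[i,i] = aᵢ` for all `i`; for every even (1-based) row index `i`,
`Z[i,i-1] = c_{i-1}` and (when `i+1 ≤ M`) `Z[i,i+1] = cᵢ`; all other
entries vanish.  (Rows/columns `i : Fin M` carry the 1-based label `i.val + 1`.) -/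
def zigzag (M : ℕ) (a c : ℕ → ℝ) : Matrix (Fin M) (Fin M) ℝ :=
  Matrix.of fun i j =>
    if i.val = j.val then a (i.val + 1)
    else if (i.val + 1) % 2 = 0 ∧ j.val + 1 = i.val then c (j.val + 1)
    else if (i.val + 1) % 2 = 0 ∧ j.val = i.val + 1 then c (i.val + 1)
    else 0

lemma zigzag_zero (M : ℕ) (a : ℕ → ℝ) :
    zigzag M a (fun _ => 0) = Matrix.diagonal (fun i : Fin M => a (i.val + 1)) := by
  ext i j
  by_cases h : i = j
  · simp [zigzag, h]
  · have h' : ¬ i.val = j.val := fun hv => h (Fin.ext hv)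
    simp [zigzag, Matrix.diagonal, h, h']

lemma zigzag_split (M : ℕ) (a c : ℕ → ℝ) :
    zigzag M a c = zigzag M a (fun _ => 0) + zigzag M (fun _ => 0) c := by
  ext i j
  simp only [zigzag, Matrix.of_apply, Matrix.add_apply]
  split_ifs <;> simp_all

lemma zigzag_neg (M : ℕ) (c : ℕ → ℝ) :
    zigzag M (fun _ => 0) (fun k => -c k) = - zigzag M (fun _ => 0) c := by
  ext i j
  simp only [zigzag, Matrix.of_apply, Matrix.neg_apply]
  split_ifs <;> simp

lemma nilp (M : ℕ) (a c : ℕ → ℝ) :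
    zigzag M (fun _ => 0) c * Matrix.diagonal (fun i : Fin M => (a (i.val + 1))⁻¹)
      * zigzag M (fun _ => 0) c = 0 := by
  ext i k
  rw [Matrix.mul_apply, show (0 : Matrix (Fin M) (Fin M) ℝ) i k = 0 from rfl]
  refine Finset.sum_eq_zero fun j _ => ?_
  rw [Matrix.mul_diagonal]
  by_cases hrow : (i.val + 1) % 2 = 0 ∧ (j.val + 1 = i.val ∨ j.val = i.val + 1)
  · have hodd : ¬ ((j.val + 1) % 2 = 0) := by omega
    have h2 : zigzag M (fun _ => 0) c j k = 0 := by
      simp only [zigzag, Matrix.of_apply]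
      split_ifs <;> simp_all
    rw [h2, mul_zero]
  · have h1 : zigzag M (fun _ => 0) c i j = 0 := by
      simp only [zigzag, Matrix.of_apply]
      split_ifs <;> simp_all
    rw [h1, zero_mul, zero_mul]


/-- For `a₁, …, a_M` all nonzero, `Z(a,0) · Z(a,c)⁻¹ · Z(a,0) = Z(a,-c)`. -/
theorem zigzag_diag_inv_diag (M : ℕ) (a c : ℕ → ℝ)
    (ha : ∀ j, 1 ≤ j → j ≤ M → a j ≠ 0) :
    zigzag M a (fun _ => 0) * (zigzag M a c)⁻¹ * zigzag M a (fun _ => 0)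
      = zigzag M a (fun k => -c k) := by
  set D := Matrix.diagonal (fun i : Fin M => a (i.val + 1)) with hDdef
  set Dinv := Matrix.diagonal (fun i : Fin M => (a (i.val + 1))⁻¹) with hDinvdef
  have hane : ∀ i : Fin M, a (i.val + 1) ≠ 0 := fun i => ha _ (by omega) (by omega)
  have hfun : (fun i : Fin M => a (i.val + 1) * (a (i.val + 1))⁻¹) = fun _ => (1:ℝ) :=
    funext fun i => mul_inv_cancel₀ (hane i)
  have hfun' : (fun i : Fin M => (a (i.val + 1))⁻¹ * a (i.val + 1)) = fun _ => (1:ℝ) :=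
    funext fun i => inv_mul_cancel₀ (hane i)
  have hDDinv : D * Dinv = 1 := by
    rw [hDdef, hDinvdef, Matrix.diagonal_mul_diagonal, hfun, Matrix.diagonal_one]
  have hDinvD : Dinv * D = 1 := by
    rw [hDdef, hDinvdef, Matrix.diagonal_mul_diagonal, hfun', Matrix.diagonal_one]
  set N := zigzag M (fun _ => 0) c with hNdef
  have hsplit : zigzag M a c = D + N := by rw [zigzag_split, zigzag_zero]
  have hneg : zigzag M a (fun k => -c k) = D - N := by
    rw [zigzag_split, zigzag_zero, zigzag_neg, sub_eq_add_neg]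
  have hnil : N * Dinv * N = 0 := nilp M a c
  have key : zigzag M a c * (Dinv * zigzag M a (fun k => -c k) * Dinv) = 1 := by
    rw [hsplit, hneg]
    have hx : (D + N) * (Dinv * (D - N) * Dinv)
        = (D * Dinv) * (D * Dinv) + (N * Dinv) * (D * Dinv)
          - (D * Dinv) * (N * Dinv) - (N * Dinv * N) * Dinv := by noncomm_ring
    rw [hx, hDDinv, hnil]
    simp
  have hinv := Matrix.inv_eq_right_inv key
  rw [zigzag_zero, hinv, hneg]
  have hy : D * (Dinv * (D - N) * Dinv) * D = (D * Dinv) * (D - N) * (Dinv * D) := by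
    noncomm_ring
  rw [hy, hDDinv, hDinvD, one_mul, mul_one]
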